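/- Let Γ be a finite group, H ≤ Γ, σ an irreducible complex representation of Γ, and U ≤ Γ a subgroup with U ∩ H = {1}. If there exists an irreducible representation ξ of H such that Ind_H^Γ ξ is isomorphic to a direct sum of copies of σ, then σ restricted to U contains the trivial representation of U. -/
import Mathlib


/-- The space of the representation of `Γ` induced from a representation `ρ` of a
subgroup `H`: functions `f : Γ → V` with `f (h * x) = ρ h (f x)` for `h ∈ H`. -/
def indCarrierFull {Γ : Type} [Group Γ] (H : Subgroup Γ)
    {V : Type} [AddCommGroup V] [Module ℂ V] (ρ : Representation ℂ H V) :
    Submodule ℂ (Γ → V) where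
  carrier := {f | ∀ (h : H) (x : Γ), f ((h : Γ) * x) = ρ h (f x)}
  add_mem' := by
    intro f g hf hg h x
    simp [hf h x, hg h x]
  zero_mem' := by intro h x; simp
  smul_mem' := by
    intro c f hf h x
    simp [hf h x]

/-- The induced representation `Ind_H^Γ ρ`, acting by right translation. -/
def indRepFull {Γ : Type} [Group Γ] (H : Subgroup Γ)
    {V : Type} [AddCommGroup V] [Module ℂ V] (ρ : Representation ℂ H V) :
    Representation ℂ Γ (indCarrierFull H ρ) where
  toFun g :=
    { toFun := fun f => ⟨fun x => (f : Γ → V) (x * g), by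
        intro h x
        simpa [mul_assoc] using f.2 h (x * g)⟩
      map_add' := by intro f g'; apply Subtype.ext; funext x; simp
      map_smul' := by intro c f; apply Subtype.ext; funext x; simp }
  map_one' := by
    apply LinearMap.ext; intro f; apply Subtype.ext; funext x; simp
  map_mul' := by
    intro g g'; apply LinearMap.ext; intro f; apply Subtype.ext; funext x
    simp [mul_assoc]

/-- Let `Γ` be a finite group, `H, U ≤ Γ` with `U ∩ H = 1`, `σ` an irreducible complex
representation of `Γ` and `ξ` an irreducible representation of `H`. If `Ind_H^Γ ξ` is
isomorphic to a direct sum of copies of `σ`, then the restriction of `σ` to `U` contains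
the trivial representation, i.e. there is a nonzero `U`-fixed vector. -/
theorem stmt_9 {Γ V W : Type} [Group Γ] [Fintype Γ]
    [AddCommGroup V] [Module ℂ V] [AddCommGroup W] [Module ℂ W]
    (H U : Subgroup Γ) (hHU : ∀ x : Γ, x ∈ U → x ∈ H → x = 1)
    (σ : Representation ℂ Γ V)
    (hσ : Nontrivial V ∧
      ∀ S : Submodule ℂ V, (∀ (g : Γ) (v : V), v ∈ S → σ g v ∈ S) → S = ⊥ ∨ S = ⊤)
    (ξ : Representation ℂ H W)
    (hξ : Nontrivial W ∧
      ∀ S : Submodule ℂ W, (∀ (h : H) (w : W), w ∈ S → ξ h w ∈ S) → S = ⊥ ∨ S = ⊤)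
    (k : ℕ)
    (hiso : ∃ e : (indCarrierFull H ξ) ≃ₗ[ℂ] (Fin k → V),
        ∀ (g : Γ) (f : indCarrierFull H ξ) (i : Fin k),
          e (indRepFull H ξ g f) i = σ g (e f i)) :
    ∃ v : V, v ≠ 0 ∧ ∀ u ∈ U, σ u v = v := by
  classical
  obtain ⟨e, he⟩ := hiso
  have : Nontrivial W := hξ.1
  obtain ⟨w, hw⟩ := exists_ne (0 : W)
  set f₀ : Γ → W := fun x => if hx : x ∈ H then ξ ⟨x, hx⟩ w else 0 with hf₀
  have hstep : ∀ (h : H) (y : Γ), f₀ ((h : Γ) * y) = ξ h (f₀ y) := by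
    intro h y
    by_cases hy : y ∈ H
    · have hhy : (h : Γ) * y ∈ H := H.mul_mem h.2 hy
      simp only [hf₀, dif_pos hy, dif_pos hhy]
      have : (⟨(h : Γ) * y, hhy⟩ : H) = h * ⟨y, hy⟩ := rfl
      rw [this, map_mul]
      rfl
    · have hhy : (h : Γ) * y ∉ H := by
        intro hc
        exact hy (by simpa using H.mul_mem (H.inv_mem h.2) hc)
      simp [hf₀, dif_neg hy, dif_neg hhy]
  have hFmem : (fun x => ∑ u : U, f₀ (x * u)) ∈ indCarrierFull H ξ := by
    intro h x
    simp only
    rw [map_sum]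
    refine Finset.sum_congr rfl fun u _ => ?_
    rw [mul_assoc]
    exact hstep h (x * u)
  set F : indCarrierFull H ξ := ⟨_, hFmem⟩ with hF
  have hF1 : (F : Γ → W) 1 = w := by
    show (∑ u : U, f₀ (1 * u)) = w
    rw [Fintype.sum_eq_single (1 : U)]
    · simp [hf₀, dif_pos H.one_mem]
      have : (⟨(1:Γ), H.one_mem⟩ : H) = 1 := rfl
      simp [this]
    · intro u hu
      have hu' : (u : Γ) ∉ H := by
        intro hc
        exact hu (Subtype.ext (hHU u u.2 hc))
      simp [hf₀, dif_neg hu']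
  have hFne : F ≠ 0 := by
    intro hc
    apply hw
    rw [← hF1, hc]
    rfl
  have hinv : ∀ u : Γ, u ∈ U → indRepFull H ξ u F = F := by
    intro u hu
    apply Subtype.ext
    funext x
    show (∑ v : U, f₀ (x * u * v)) = ∑ v : U, f₀ (x * v)
    exact Fintype.sum_equiv (Equiv.mulLeft (⟨u, hu⟩ : U))
      (fun v : U => f₀ (x * u * v)) (fun v : U => f₀ (x * v))
      (fun v => by simp [mul_assoc])
  have hφne : e F ≠ 0 := fun hc => hFne (by simpa using e.injective (by simpa using hc))
  obtain ⟨i, hi⟩ := Function.ne_iff.mp hφne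
  refine ⟨e F i, hi, fun u hu => ?_⟩
  have := he u F i
  rw [hinv u hu] at this
  exact this.symm
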